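/- The tensor product of two 2-dimensional semitypical irreducible g̃l(1|1)-modules S(n₁,e₁,ñ₁) and S(n₂,e₂,ñ₂) with e₁+e₂ ≠ 0 decomposes as a direct sum of two semitypical irreducibles: the highest weight vectors are v⊗w and e₁ v⊗ψ⁻w − e₂ ψ⁻v⊗w, and these generate complementary 2-dimensional submodules. -/

import Mathlib

open Matrix TensorProduct

namespace SemitypTensor

/-- The carrier of the 2-dimensional semitypical irreducible `S(n, e, ñ)` of the Takiff
superalgebra of `gl(1|1)`, with basis `(v, ψ⁻v)`. -/
abbrev S : Type := Fin 2 → ℂ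

/- Matrices of the generators on `S(n, e, ñ)` (with `e ≠ 0`):
`Nv = nv`, `Ev = ev`, `Ñv = ñv`, `Ẽ = ψ̃± = 0`, `ψ⁺ψ⁻v = ev`. -/
noncomputable def SN (n : ℂ) : Matrix (Fin 2) (Fin 2) ℂ := !![n, 0; 0, n - 1]
noncomputable def SE (e : ℂ) : Matrix (Fin 2) (Fin 2) ℂ := e • 1
noncomputable def SNt (nt : ℂ) : Matrix (Fin 2) (Fin 2) ℂ := nt • 1
noncomputable def SEt : Matrix (Fin 2) (Fin 2) ℂ := 0
noncomputable def Spp (e : ℂ) : Matrix (Fin 2) (Fin 2) ℂ := !![0, e; 0, 0]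
noncomputable def Spm : Matrix (Fin 2) (Fin 2) ℂ := !![0, 0; 1, 0]
noncomputable def Stp : Matrix (Fin 2) (Fin 2) ℂ := 0
noncomputable def Stm : Matrix (Fin 2) (Fin 2) ℂ := 0
/-- Parity operator: `v` even, `ψ⁻v` odd. -/
noncomputable def SP : Matrix (Fin 2) (Fin 2) ℂ := !![1, 0; 0, -1]

/-- The highest weight vector `v` of `S(n, e, ñ)`. -/
noncomputable def hwv : S := Pi.single 0 1

variable (n1 e1 nt1 n2 e2 nt2 : ℂ)

/- The coproduct (graded tensor product) action `Δ(x) = x ⊗ 1 + 1 ⊗ x` on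
`S(n₁,e₁,ñ₁) ⊗ S(n₂,e₂,ñ₂)`, with Koszul signs for the odd generators:
`x(a ⊗ b) = xa ⊗ b + (−1)^{|a|} a ⊗ xb`. -/
noncomputable def ΔN : S ⊗[ℂ] S →ₗ[ℂ] S ⊗[ℂ] S :=
  TensorProduct.map (toLin' (SN n1)) LinearMap.id + TensorProduct.map LinearMap.id (toLin' (SN n2))
noncomputable def ΔE : S ⊗[ℂ] S →ₗ[ℂ] S ⊗[ℂ] S :=
  TensorProduct.map (toLin' (SE e1)) LinearMap.id + TensorProduct.map LinearMap.id (toLin' (SE e2))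
noncomputable def ΔNt : S ⊗[ℂ] S →ₗ[ℂ] S ⊗[ℂ] S :=
  TensorProduct.map (toLin' (SNt nt1)) LinearMap.id + TensorProduct.map LinearMap.id (toLin' (SNt nt2))
noncomputable def ΔEt : S ⊗[ℂ] S →ₗ[ℂ] S ⊗[ℂ] S :=
  TensorProduct.map (toLin' SEt) LinearMap.id + TensorProduct.map LinearMap.id (toLin' SEt)
noncomputable def Δpp : S ⊗[ℂ] S →ₗ[ℂ] S ⊗[ℂ] S :=
  TensorProduct.map (toLin' (Spp e1)) LinearMap.id + TensorProduct.map (toLin' SP) (toLin' (Spp e2))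
noncomputable def Δpm : S ⊗[ℂ] S →ₗ[ℂ] S ⊗[ℂ] S :=
  TensorProduct.map (toLin' Spm) LinearMap.id + TensorProduct.map (toLin' SP) (toLin' Spm)
noncomputable def Δtp : S ⊗[ℂ] S →ₗ[ℂ] S ⊗[ℂ] S :=
  TensorProduct.map (toLin' Stp) LinearMap.id + TensorProduct.map (toLin' SP) (toLin' Stp)
noncomputable def Δtm : S ⊗[ℂ] S →ₗ[ℂ] S ⊗[ℂ] S :=
  TensorProduct.map (toLin' Stm) LinearMap.id + TensorProduct.map (toLin' SP) (toLin' Stm)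

/-- A submodule of the tensor product invariant under the `g̃l(1|1)`-action. -/
def Invariant (W : Submodule ℂ (S ⊗[ℂ] S)) : Prop :=
  ∀ w ∈ W, ΔN n1 n2 w ∈ W ∧ ΔE e1 e2 w ∈ W ∧ ΔNt nt1 nt2 w ∈ W ∧ ΔEt w ∈ W ∧
    Δpp e1 e2 w ∈ W ∧ Δpm w ∈ W ∧ Δtp w ∈ W ∧ Δtm w ∈ W

/-- The two highest weight vectors of the tensor product:
`u₁ = v ⊗ w` and `u₂ = e₁ v ⊗ ψ⁻w − e₂ ψ⁻v ⊗ w`. -/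
noncomputable def u₁ : S ⊗[ℂ] S := hwv ⊗ₜ[ℂ] hwv
noncomputable def u₂ : S ⊗[ℂ] S :=
  e1 • (hwv ⊗ₜ[ℂ] toLin' Spm hwv) - e2 • (toLin' Spm hwv ⊗ₜ[ℂ] hwv)

end SemitypTensor

namespace SemitypTensorAux
open SemitypTensor

noncomputable def bS : Module.Basis (Fin 2) ℂ S := Pi.basisFun ℂ (Fin 2)
noncomputable def BB : Module.Basis (Fin 2 × Fin 2) ℂ (S ⊗[ℂ] S) := bS.tensorProduct bS
noncomputable def tt (i j : Fin 2) : S ⊗[ℂ] S := bS i ⊗ₜ[ℂ] bS j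

lemma tB (i j : Fin 2) : tt i j = BB (i, j) := by
  rw [BB, Module.Basis.tensorProduct_apply]; rfl

lemma hwv_eq : hwv = bS 0 := by simp [hwv, bS]

lemma hSpm0 : Spm *ᵥ bS 0 = bS 1 := by
  funext i; fin_cases i <;>
    simp [bS, Spm, Pi.basisFun_apply, Matrix.mulVec, dotProduct, Fin.sum_univ_two]
lemma hSpm1 : Spm *ᵥ bS 1 = 0 := by
  funext i; fin_cases i <;>
    simp [bS, Spm, Pi.basisFun_apply, Matrix.mulVec, dotProduct, Fin.sum_univ_two]
lemma hSP0 : SP *ᵥ bS 0 = bS 0 := by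
  funext i; fin_cases i <;>
    simp [bS, SP, Pi.basisFun_apply, Matrix.mulVec, dotProduct, Fin.sum_univ_two]
lemma hSP1 : SP *ᵥ bS 1 = -bS 1 := by
  funext i; fin_cases i <;>
    simp [bS, SP, Pi.basisFun_apply, Matrix.mulVec, dotProduct, Fin.sum_univ_two]
lemma hSN0 (n : ℂ) : SN n *ᵥ bS 0 = n • bS 0 := by
  funext i; fin_cases i <;>
    simp [bS, SN, Pi.basisFun_apply, Matrix.mulVec, dotProduct, Fin.sum_univ_two]
lemma hSN1 (n : ℂ) : SN n *ᵥ bS 1 = (n - 1) • bS 1 := by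
  funext i; fin_cases i <;>
    simp [bS, SN, Pi.basisFun_apply, Matrix.mulVec, dotProduct, Fin.sum_univ_two]
lemma hSpp0 (e : ℂ) : Spp e *ᵥ bS 0 = 0 := by
  funext i; fin_cases i <;>
    simp [bS, Spp, Pi.basisFun_apply, Matrix.mulVec, dotProduct, Fin.sum_univ_two]
lemma hSpp1 (e : ℂ) : Spp e *ᵥ bS 1 = e • bS 0 := by
  funext i; fin_cases i <;>
    simp [bS, Spp, Pi.basisFun_apply, Matrix.mulVec, dotProduct, Fin.sum_univ_two]
lemma hSE (e : ℂ) (x : S) : SE e *ᵥ x = e • x := by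
  rw [SE, Matrix.smul_mulVec, Matrix.one_mulVec]
lemma hSNt (n : ℂ) (x : S) : SNt n *ᵥ x = n • x := by
  rw [SNt, Matrix.smul_mulVec, Matrix.one_mulVec]

section ops
variable (n1 e1 nt1 n2 e2 nt2 : ℂ)

lemma ΔE_apply (x : S ⊗[ℂ] S) : ΔE e1 e2 x = (e1 + e2) • x := by
  have : ΔE e1 e2 = (e1 + e2) • LinearMap.id := by
    apply TensorProduct.ext'
    intro x y
    simp only [ΔE, LinearMap.add_apply, TensorProduct.map_tmul, Matrix.toLin'_apply,
      LinearMap.id_coe, id_eq, hSE, LinearMap.smul_apply, TensorProduct.tmul_smul,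
      ← TensorProduct.smul_tmul']
    module
  rw [this]; rfl

lemma ΔNt_apply (x : S ⊗[ℂ] S) : ΔNt nt1 nt2 x = (nt1 + nt2) • x := by
  have : ΔNt nt1 nt2 = (nt1 + nt2) • LinearMap.id := by
    apply TensorProduct.ext'
    intro x y
    simp only [ΔNt, LinearMap.add_apply, TensorProduct.map_tmul, Matrix.toLin'_apply,
      LinearMap.id_coe, id_eq, hSNt, LinearMap.smul_apply, TensorProduct.tmul_smul,
      ← TensorProduct.smul_tmul']
    module
  rw [this]; rfl

lemma ΔEt_apply (x : S ⊗[ℂ] S) : ΔEt x = 0 := by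
  have : ΔEt = (0 : S ⊗[ℂ] S →ₗ[ℂ] S ⊗[ℂ] S) := by
    apply TensorProduct.ext'
    intro x y
    simp [ΔEt, SEt, Matrix.toLin'_apply]
  rw [this]; rfl

lemma Δtp_apply (x : S ⊗[ℂ] S) : Δtp x = 0 := by
  have : Δtp = (0 : S ⊗[ℂ] S →ₗ[ℂ] S ⊗[ℂ] S) := by
    apply TensorProduct.ext'
    intro x y
    simp [Δtp, Stp, Matrix.toLin'_apply]
  rw [this]; rfl

lemma Δtm_apply (x : S ⊗[ℂ] S) : Δtm x = 0 := by
  have : Δtm = (0 : S ⊗[ℂ] S →ₗ[ℂ] S ⊗[ℂ] S) := by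
    apply TensorProduct.ext'
    intro x y
    simp [Δtm, Stm, Matrix.toLin'_apply]
  rw [this]; rfl

lemma dN00 : ΔN n1 n2 (tt 0 0) = (n1 + n2) • tt 0 0 := by
  simp only [ΔN, tt, LinearMap.add_apply, TensorProduct.map_tmul, Matrix.toLin'_apply,
    LinearMap.id_coe, id_eq, hSN0, hSN1, hSpp0, hSpp1, hSpm0, hSpm1, hSP0, hSP1,
    TensorProduct.tmul_zero, TensorProduct.zero_tmul, TensorProduct.neg_tmul,
    TensorProduct.tmul_neg, TensorProduct.tmul_smul, ← TensorProduct.smul_tmul']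
  module
lemma dN01 : ΔN n1 n2 (tt 0 1) = (n1 + n2 - 1) • tt 0 1 := by
  simp only [ΔN, tt, LinearMap.add_apply, TensorProduct.map_tmul, Matrix.toLin'_apply,
    LinearMap.id_coe, id_eq, hSN0, hSN1, hSpp0, hSpp1, hSpm0, hSpm1, hSP0, hSP1,
    TensorProduct.tmul_zero, TensorProduct.zero_tmul, TensorProduct.neg_tmul,
    TensorProduct.tmul_neg, TensorProduct.tmul_smul, ← TensorProduct.smul_tmul']
  module
lemma dN10 : ΔN n1 n2 (tt 1 0) = (n1 + n2 - 1) • tt 1 0 := by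
  simp only [ΔN, tt, LinearMap.add_apply, TensorProduct.map_tmul, Matrix.toLin'_apply,
    LinearMap.id_coe, id_eq, hSN0, hSN1, hSpp0, hSpp1, hSpm0, hSpm1, hSP0, hSP1,
    TensorProduct.tmul_zero, TensorProduct.zero_tmul, TensorProduct.neg_tmul,
    TensorProduct.tmul_neg, TensorProduct.tmul_smul, ← TensorProduct.smul_tmul']
  module
lemma dN11 : ΔN n1 n2 (tt 1 1) = (n1 + n2 - 2) • tt 1 1 := by
  simp only [ΔN, tt, LinearMap.add_apply, TensorProduct.map_tmul, Matrix.toLin'_apply,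
    LinearMap.id_coe, id_eq, hSN0, hSN1, hSpp0, hSpp1, hSpm0, hSpm1, hSP0, hSP1,
    TensorProduct.tmul_zero, TensorProduct.zero_tmul, TensorProduct.neg_tmul,
    TensorProduct.tmul_neg, TensorProduct.tmul_smul, ← TensorProduct.smul_tmul']
  module

lemma dpp00 : Δpp e1 e2 (tt 0 0) = 0 := by
  simp only [Δpp, tt, LinearMap.add_apply, TensorProduct.map_tmul, Matrix.toLin'_apply,
    LinearMap.id_coe, id_eq, hSN0, hSN1, hSpp0, hSpp1, hSpm0, hSpm1, hSP0, hSP1,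
    TensorProduct.tmul_zero, TensorProduct.zero_tmul, TensorProduct.neg_tmul,
    TensorProduct.tmul_neg, TensorProduct.tmul_smul, ← TensorProduct.smul_tmul']
  module
lemma dpp01 : Δpp e1 e2 (tt 0 1) = e2 • tt 0 0 := by
  simp only [Δpp, tt, LinearMap.add_apply, TensorProduct.map_tmul, Matrix.toLin'_apply,
    LinearMap.id_coe, id_eq, hSN0, hSN1, hSpp0, hSpp1, hSpm0, hSpm1, hSP0, hSP1,
    TensorProduct.tmul_zero, TensorProduct.zero_tmul, TensorProduct.neg_tmul,
    TensorProduct.tmul_neg, TensorProduct.tmul_smul, ← TensorProduct.smul_tmul']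
  module
lemma dpp10 : Δpp e1 e2 (tt 1 0) = e1 • tt 0 0 := by
  simp only [Δpp, tt, LinearMap.add_apply, TensorProduct.map_tmul, Matrix.toLin'_apply,
    LinearMap.id_coe, id_eq, hSN0, hSN1, hSpp0, hSpp1, hSpm0, hSpm1, hSP0, hSP1,
    TensorProduct.tmul_zero, TensorProduct.zero_tmul, TensorProduct.neg_tmul,
    TensorProduct.tmul_neg, TensorProduct.tmul_smul, ← TensorProduct.smul_tmul']
  module
lemma dpp11 : Δpp e1 e2 (tt 1 1) = e1 • tt 0 1 - e2 • tt 1 0 := by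
  simp only [Δpp, tt, LinearMap.add_apply, TensorProduct.map_tmul, Matrix.toLin'_apply,
    LinearMap.id_coe, id_eq, hSN0, hSN1, hSpp0, hSpp1, hSpm0, hSpm1, hSP0, hSP1,
    TensorProduct.tmul_zero, TensorProduct.zero_tmul, TensorProduct.neg_tmul,
    TensorProduct.tmul_neg, TensorProduct.tmul_smul, ← TensorProduct.smul_tmul']
  module

lemma dpm00 : Δpm (tt 0 0) = tt 0 1 + tt 1 0 := by
  simp only [Δpm, tt, LinearMap.add_apply, TensorProduct.map_tmul, Matrix.toLin'_apply,
    LinearMap.id_coe, id_eq, hSN0, hSN1, hSpp0, hSpp1, hSpm0, hSpm1, hSP0, hSP1,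
    TensorProduct.tmul_zero, TensorProduct.zero_tmul, TensorProduct.neg_tmul,
    TensorProduct.tmul_neg, TensorProduct.tmul_smul, ← TensorProduct.smul_tmul']
  module
lemma dpm01 : Δpm (tt 0 1) = tt 1 1 := by
  simp only [Δpm, tt, LinearMap.add_apply, TensorProduct.map_tmul, Matrix.toLin'_apply,
    LinearMap.id_coe, id_eq, hSN0, hSN1, hSpp0, hSpp1, hSpm0, hSpm1, hSP0, hSP1,
    TensorProduct.tmul_zero, TensorProduct.zero_tmul, TensorProduct.neg_tmul,
    TensorProduct.tmul_neg, TensorProduct.tmul_smul, ← TensorProduct.smul_tmul']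
  module
lemma dpm10 : Δpm (tt 1 0) = -tt 1 1 := by
  simp only [Δpm, tt, LinearMap.add_apply, TensorProduct.map_tmul, Matrix.toLin'_apply,
    LinearMap.id_coe, id_eq, hSN0, hSN1, hSpp0, hSpp1, hSpm0, hSpm1, hSP0, hSP1,
    TensorProduct.tmul_zero, TensorProduct.zero_tmul, TensorProduct.neg_tmul,
    TensorProduct.tmul_neg, TensorProduct.tmul_smul, ← TensorProduct.smul_tmul']
  module
lemma dpm11 : Δpm (tt 1 1) = 0 := by
  simp only [Δpm, tt, LinearMap.add_apply, TensorProduct.map_tmul, Matrix.toLin'_apply,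
    LinearMap.id_coe, id_eq, hSN0, hSN1, hSpp0, hSpp1, hSpm0, hSpm1, hSP0, hSP1,
    TensorProduct.tmul_zero, TensorProduct.zero_tmul, TensorProduct.neg_tmul,
    TensorProduct.tmul_neg, TensorProduct.tmul_smul, ← TensorProduct.smul_tmul']
  module

lemma u₁_eq : u₁ = tt 0 0 := by rw [u₁, tt, hwv_eq]
lemma u₂_eq : u₂ e1 e2 = e1 • tt 0 1 - e2 • tt 1 0 := by
  rw [u₂, tt, tt, hwv_eq, Matrix.toLin'_apply, hSpm0]

end ops

lemma memA {A C : S ⊗[ℂ] S} : A ∈ Submodule.span ℂ ({A, C} : Set (S ⊗[ℂ] S)) :=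
  Submodule.subset_span (Set.mem_insert _ _)
lemma memC {A C : S ⊗[ℂ] S} : C ∈ Submodule.span ℂ ({A, C} : Set (S ⊗[ℂ] S)) :=
  Submodule.subset_span (Set.mem_insert_of_mem _ rfl)

lemma span_stable (f : S ⊗[ℂ] S →ₗ[ℂ] S ⊗[ℂ] S) (A C : S ⊗[ℂ] S)
    (hA : f A ∈ Submodule.span ℂ {A, C}) (hC : f C ∈ Submodule.span ℂ {A, C}) :
    ∀ w ∈ Submodule.span ℂ ({A, C} : Set (S ⊗[ℂ] S)),
      f w ∈ Submodule.span ℂ ({A, C} : Set (S ⊗[ℂ] S)) := by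
  intro w hw
  have hle : Submodule.span ℂ ({A, C} : Set (S ⊗[ℂ] S)) ≤
      Submodule.comap f (Submodule.span ℂ ({A, C} : Set (S ⊗[ℂ] S))) := by
    refine Submodule.span_le.mpr ?_
    intro x hx
    rcases hx with rfl | hx
    · exact hA
    · rcases hx with rfl
      exact hC
  exact hle hw

lemma irred_aux (A C : S ⊗[ℂ] S) (k : ℂ) (hk : k ≠ 0)
    (f g : S ⊗[ℂ] S →ₗ[ℂ] S ⊗[ℂ] S)
    (hfA : f A = C) (hfC : f C = 0) (hgC : g C = k • A)
    (U : Submodule ℂ (S ⊗[ℂ] S))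
    (hUf : ∀ w ∈ U, f w ∈ U) (hUg : ∀ w ∈ U, g w ∈ U)
    (hlt : U < Submodule.span ℂ {A, C}) : U = ⊥ := by
  rw [Submodule.eq_bot_iff]
  intro x hxU
  by_contra hx0
  have hxW := hlt.le hxU
  obtain ⟨a, c, hac⟩ := Submodule.mem_span_pair.mp hxW
  have hCU : C ∈ U := by
    rcases eq_or_ne a 0 with ha | ha
    · have hxc : x = c • C := by rw [← hac, ha, zero_smul, zero_add]
      have hc : c ≠ 0 := by rintro rfl; exact hx0 (by rw [hxc, zero_smul])
      have h := U.smul_mem c⁻¹ hxU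
      rwa [hxc, smul_smul, inv_mul_cancel₀ hc, one_smul] at h
    · have h1 : f x ∈ U := hUf x hxU
      have h2 : f x = a • C := by
        rw [← hac, map_add, _root_.map_smul, _root_.map_smul, hfA, hfC, smul_zero, add_zero]
      have h := U.smul_mem a⁻¹ h1
      rwa [h2, smul_smul, inv_mul_cancel₀ ha, one_smul] at h
  have hAU : A ∈ U := by
    have h1 := hUg C hCU
    rw [hgC] at h1
    have h := U.smul_mem k⁻¹ h1
    rwa [smul_smul, inv_mul_cancel₀ hk, one_smul] at h
  refine absurd ?_ hlt.not_ge
  refine Submodule.span_le.mpr ?_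
  intro y hy
  rcases hy with rfl | hy
  · exact hAU
  · rcases hy with rfl
    exact hCU

end SemitypTensorAux

open SemitypTensorAux


open SemitypTensor in
/-- The tensor product of two 2-dimensional semitypical irreducible `g̃l(1|1)`-modules
`S(n₁,e₁,ñ₁)` and `S(n₂,e₂,ñ₂)` with `e₁ + e₂ ≠ 0` decomposes as a direct sum of two
semitypical irreducibles: the highest weight vectors `u₁ = v⊗w` and
`u₂ = e₁ v⊗ψ⁻w − e₂ ψ⁻v⊗w` (both annihilated by `ψ⁺` and `ψ̃⁺`) generate complementary
invariant 2-dimensional irreducible submodules. -/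
theorem semitypical_tensor_decomposition (n1 e1 nt1 n2 e2 nt2 : ℂ)
    (he1 : e1 ≠ 0) (he2 : e2 ≠ 0) (he : e1 + e2 ≠ 0) :
    Δpp e1 e2 (u₁) = 0 ∧ Δtp (u₁) = 0 ∧
    Δpp e1 e2 (u₂ e1 e2) = 0 ∧ Δtp (u₂ e1 e2) = 0 ∧
    Invariant n1 e1 nt1 n2 e2 nt2 (Submodule.span ℂ {u₁, Δpm u₁}) ∧
    Invariant n1 e1 nt1 n2 e2 nt2 (Submodule.span ℂ {u₂ e1 e2, Δpm (u₂ e1 e2)}) ∧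
    IsCompl (Submodule.span ℂ {u₁, Δpm u₁}) (Submodule.span ℂ {u₂ e1 e2, Δpm (u₂ e1 e2)}) ∧
    Module.finrank ℂ (Submodule.span ℂ {u₁, Δpm u₁}) = 2 ∧
    Module.finrank ℂ (Submodule.span ℂ {u₂ e1 e2, Δpm (u₂ e1 e2)}) = 2 ∧
    (∀ U : Submodule ℂ (S ⊗[ℂ] S), Invariant n1 e1 nt1 n2 e2 nt2 U →
      U < Submodule.span ℂ {u₁, Δpm u₁} → U = ⊥) ∧
    (∀ U : Submodule ℂ (S ⊗[ℂ] S), Invariant n1 e1 nt1 n2 e2 nt2 U →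
      U < Submodule.span ℂ {u₂ e1 e2, Δpm (u₂ e1 e2)} → U = ⊥) := by
  classical
  have hDu₁ : Δpm u₁ = tt 0 1 + tt 1 0 := by rw [u₁_eq, dpm00]
  have hu₂ : u₂ e1 e2 = e1 • tt 0 1 - e2 • tt 1 0 := u₂_eq e1 e2
  have hDu₂ : Δpm (u₂ e1 e2) = (e1 + e2) • tt 1 1 := by
    rw [hu₂]
    simp only [map_sub, _root_.map_smul, dpm01, dpm10]
    module
  rw [hDu₁, hDu₂, u₁_eq, hu₂]
  -- abbreviations
  set A₁ : S ⊗[ℂ] S := tt 0 0 with hA₁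
  set C₁ : S ⊗[ℂ] S := tt 0 1 + tt 1 0 with hC₁
  set A₂ : S ⊗[ℂ] S := e1 • tt 0 1 - e2 • tt 1 0 with hA₂
  set C₂ : S ⊗[ℂ] S := (e1 + e2) • tt 1 1 with hC₂
  -- operator values on generators
  have hNA1 : ΔN n1 n2 A₁ = (n1 + n2) • A₁ := dN00 n1 n2
  have hNC1 : ΔN n1 n2 C₁ = (n1 + n2 - 1) • C₁ := by
    rw [hC₁, map_add, dN01, dN10, smul_add]
  have hppA1 : Δpp e1 e2 A₁ = 0 := dpp00 e1 e2
  have hppC1 : Δpp e1 e2 C₁ = (e1 + e2) • A₁ := by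
    rw [hC₁, map_add, dpp01, dpp10, hA₁]
    module
  have hpmA1 : Δpm A₁ = C₁ := dpm00
  have hpmC1 : Δpm C₁ = 0 := by
    rw [hC₁, map_add, dpm01, dpm10, add_neg_cancel]
  have hNA2 : ΔN n1 n2 A₂ = (n1 + n2 - 1) • A₂ := by
    rw [hA₂]
    simp only [map_sub, _root_.map_smul, dN01, dN10]
    module
  have hNC2 : ΔN n1 n2 C₂ = (n1 + n2 - 2) • C₂ := by
    rw [hC₂, _root_.map_smul, dN11]
    module
  have hppA2 : Δpp e1 e2 A₂ = 0 := by
    rw [hA₂]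
    simp only [map_sub, _root_.map_smul, dpp01, dpp10]
    module
  have hppC2 : Δpp e1 e2 C₂ = (e1 + e2) • A₂ := by
    rw [hC₂, _root_.map_smul, dpp11, hA₂]
  have hpmA2 : Δpm A₂ = C₂ := by
    rw [hA₂]
    simp only [map_sub, _root_.map_smul, dpm01, dpm10]
    rw [hC₂]; module
  have hpmC2 : Δpm C₂ = 0 := by
    rw [hC₂, _root_.map_smul, dpm11, smul_zero]
  -- the four-vector family
  set v4 : Fin 4 → S ⊗[ℂ] S := ![A₁, C₁, A₂, C₂] with hv4
  have v40 : v4 0 = A₁ := rfl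
  have v41 : v4 1 = C₁ := rfl
  have v42 : v4 2 = A₂ := rfl
  have v43 : v4 3 = C₂ := rfl
  have hrep : ∀ (i j : Fin 2) (p : Fin 2 × Fin 2),
      BB.repr (tt i j) p = if (i, j) = p then 1 else 0 := by
    intro i j p
    rw [tB, BB.repr_self, Finsupp.single_apply]
  have hli : LinearIndependent ℂ v4 := by
    rw [Fintype.linearIndependent_iff]
    intro g hg
    rw [Fin.sum_univ_four, v40, v41, v42, v43, hA₁, hC₁, hA₂, hC₂] at hg
    have key : ∀ p : Fin 2 × Fin 2,
        g 0 * (if ((0 : Fin 2), (0 : Fin 2)) = p then 1 else 0)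
        + (g 1 * (if ((0 : Fin 2), (1 : Fin 2)) = p then 1 else 0)
            + g 1 * (if ((1 : Fin 2), (0 : Fin 2)) = p then 1 else 0))
        + (g 2 * (e1 * (if ((0 : Fin 2), (1 : Fin 2)) = p then 1 else 0))
            - g 2 * (e2 * (if ((1 : Fin 2), (0 : Fin 2)) = p then 1 else 0)))
        + g 3 * ((e1 + e2) * (if ((1 : Fin 2), (1 : Fin 2)) = p then 1 else 0)) = 0 := by
      intro p
      have h := congrArg (fun z => (BB.repr z) p) hg
      simpa only [map_add, map_sub, _root_.map_smul, Finsupp.add_apply, Finsupp.sub_apply,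
        Finsupp.smul_apply, smul_eq_mul, hrep, map_zero, Finsupp.zero_apply,
        mul_add, mul_sub] using h
    have h00 := key (0, 0)
    have h01 := key (0, 1)
    have h10 := key (1, 0)
    have h11 := key (1, 1)
    simp (config := { decide := true }) at h00 h01 h10 h11
    have hg3 : g 3 = 0 := by
      rcases h11 with h | h
      · exact h
      · exact absurd h he
    have hg2 : g 2 = 0 := by
      have : g 2 * (e1 + e2) = 0 := by linear_combination h01 - h10
      rcases mul_eq_zero.mp this with h | h
      · exact h
      · exact absurd h he
    have hg1 : g 1 = 0 := by linear_combination h01 - g 2 * e1 - hg2 * e1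
    intro i
    fin_cases i
    · exact h00
    · exact hg1
    · exact hg2
    · exact hg3
  -- sup is top
  have htop : Submodule.span ℂ {A₁, C₁} ⊔ Submodule.span ℂ {A₂, C₂} = ⊤ := by
    refine top_unique ?_
    rw [← BB.span_eq]
    refine (Submodule.span_le.mpr ?_).trans le_rfl
    rintro x ⟨⟨i, j⟩, rfl⟩
    rw [← tB]
    have hmem : ∀ y : S ⊗[ℂ] S, (e1 + e2) • y ∈
        Submodule.span ℂ {A₁, C₁} ⊔ Submodule.span ℂ {A₂, C₂} →
        y ∈ Submodule.span ℂ {A₁, C₁} ⊔ Submodule.span ℂ {A₂, C₂} := by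
      intro y hy
      have h := Submodule.smul_mem _ (e1 + e2)⁻¹ hy
      rwa [smul_smul, inv_mul_cancel₀ he, one_smul] at h
    fin_cases i <;> fin_cases j <;>
      simp only [Fin.zero_eta, Fin.mk_one, Fin.isValue]
    · exact Submodule.mem_sup_left memA
    · refine hmem _ ?_
      have hx : (e1 + e2) • tt 0 1 = e2 • C₁ + A₂ := by rw [hC₁, hA₂]; module
      rw [hx]
      exact add_mem (Submodule.smul_mem _ _ (Submodule.mem_sup_left memC))
        (Submodule.mem_sup_right memA)
    · refine hmem _ ?_
      have hx : (e1 + e2) • tt 1 0 = e1 • C₁ - A₂ := by rw [hC₁, hA₂]; module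
      rw [hx]
      exact sub_mem (Submodule.smul_mem _ _ (Submodule.mem_sup_left memC))
        (Submodule.mem_sup_right memA)
    · refine hmem _ ?_
      rw [← hC₂]
      exact Submodule.mem_sup_right memC
  have hdisj : Disjoint (Submodule.span ℂ {A₁, C₁}) (Submodule.span ℂ {A₂, C₂}) := by
    have h := hli.disjoint_span_image (s := {0, 1}) (t := {2, 3}) (by
      rw [Set.disjoint_left]
      rintro a (rfl | rfl) hb <;> simp at hb)
    rwa [Set.image_pair, Set.image_pair, v40, v41, v42, v43] at h
  -- finranks
  have hfr : ∀ a b : Fin 4, a ≠ b →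
      Module.finrank ℂ (Submodule.span ℂ {v4 a, v4 b}) = 2 := by
    intro a b hab
    have hinj : Function.Injective ![a, b] := by
      intro x y hxy
      fin_cases x <;> fin_cases y
      · rfl
      · exact absurd (by simpa using hxy) hab
      · exact absurd (by simpa using hxy : b = a).symm hab
      · rfl
    have hli2 : LinearIndependent ℂ (v4 ∘ ![a, b]) := hli.comp _ hinj
    have hr : Set.range (v4 ∘ ![a, b]) = {v4 a, v4 b} := by
      ext z
      simp [Fin.exists_fin_two, eq_comm]
    have := finrank_span_eq_card hli2
    rwa [hr, Fintype.card_fin] at this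
  refine ⟨hppA1, Δtp_apply _, hppA2, Δtp_apply _, ?_, ?_, ⟨hdisj, codisjoint_iff.mpr htop⟩,
    ?_, ?_, ?_, ?_⟩
  · -- invariance of W₁
    intro w hw
    refine ⟨?_, ?_, ?_, ?_, ?_, ?_, ?_, ?_⟩
    · exact span_stable _ _ _ (by rw [hNA1]; exact Submodule.smul_mem _ _ memA)
        (by rw [hNC1]; exact Submodule.smul_mem _ _ memC) w hw
    · rw [ΔE_apply]; exact Submodule.smul_mem _ _ hw
    · rw [ΔNt_apply]; exact Submodule.smul_mem _ _ hw
    · rw [ΔEt_apply]; exact Submodule.zero_mem _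
    · exact span_stable _ _ _ (by rw [hppA1]; exact Submodule.zero_mem _)
        (by rw [hppC1]; exact Submodule.smul_mem _ _ memA) w hw
    · exact span_stable _ _ _ (by rw [hpmA1]; exact memC)
        (by rw [hpmC1]; exact Submodule.zero_mem _) w hw
    · rw [Δtp_apply]; exact Submodule.zero_mem _
    · rw [Δtm_apply]; exact Submodule.zero_mem _
  · -- invariance of W₂
    intro w hw
    refine ⟨?_, ?_, ?_, ?_, ?_, ?_, ?_, ?_⟩
    · exact span_stable _ _ _ (by rw [hNA2]; exact Submodule.smul_mem _ _ memA)
        (by rw [hNC2]; exact Submodule.smul_mem _ _ memC) w hw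
    · rw [ΔE_apply]; exact Submodule.smul_mem _ _ hw
    · rw [ΔNt_apply]; exact Submodule.smul_mem _ _ hw
    · rw [ΔEt_apply]; exact Submodule.zero_mem _
    · exact span_stable _ _ _ (by rw [hppA2]; exact Submodule.zero_mem _)
        (by rw [hppC2]; exact Submodule.smul_mem _ _ memA) w hw
    · exact span_stable _ _ _ (by rw [hpmA2]; exact memC)
        (by rw [hpmC2]; exact Submodule.zero_mem _) w hw
    · rw [Δtp_apply]; exact Submodule.zero_mem _
    · rw [Δtm_apply]; exact Submodule.zero_mem _
  · have := hfr 0 1 (by decide)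
    rwa [v40, v41] at this
  · have := hfr 2 3 (by decide)
    rwa [v42, v43] at this
  · intro U hU hlt
    exact irred_aux A₁ C₁ (e1 + e2) he Δpm (Δpp e1 e2) hpmA1 hpmC1 hppC1 U
      (fun w hw => (hU w hw).2.2.2.2.2.1) (fun w hw => (hU w hw).2.2.2.2.1) hlt
  · intro U hU hlt
    exact irred_aux A₂ C₂ (e1 + e2) he Δpm (Δpp e1 e2) hpmA2 hpmC2 hppC2 U
      (fun w hw => (hU w hw).2.2.2.2.2.1) (fun w hw => (hU w hw).2.2.2.2.1) hlt
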